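/- arXiv:1304.7136 — 2 statements merged into one kernel-verified Lean document; each statement's English description precedes it below -/
import Mathlib

section
/- For all s > 0, λ > 0, every t ∈ (0,T) and every x ∈ cl(G), the time derivative of the Carleman weight ℓ satisfies |∂ₜℓ(t,x)| ≤ 2T·s·φ(t,x)^{3/2}. -/
/-- For all `s > 0`, `lam > 0`, every `t ∈ (0,T)` and every
`x ∈ cl(G)`, the time derivative of the Carleman weight `ℓ` satisfies
`|∂ₜℓ(t,x)| ≤ 2T·s·φ(t,x)^{3/2}`. -/
theorem carleman_weight_time_deriv_bound
    {n : ℕ} (hn : 1 ≤ n)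
    (G : Set (EuclideanSpace ℝ (Fin n))) (hG : Bornology.IsBounded G)
    (x₀ : EuclideanSpace ℝ (Fin n)) (hx₀ : x₀ ∉ closure G)
    (T : ℝ) (hT : 0 < T)
    (σ : ℝ) (hσ : 0 < σ)
    (ψ : EuclideanSpace ℝ (Fin n) → ℝ)
    (hψ : ψ = fun x => ‖x - x₀‖ ^ 2 + σ)
    (M : ℝ) (hM : M = sSup (ψ '' closure G))
    (hψM : ∀ x ∈ closure G, ψ x ≥ 5 / 6 * M)
    (s lam : ℝ) (hs : 0 < s) (hlam : 0 < lam)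
    (ℓ φ : ℝ → EuclideanSpace ℝ (Fin n) → ℝ)
    (hℓ : ℓ = fun t x =>
      s * (Real.exp (4 * lam * ψ x) - Real.exp (5 * lam * M)) /
        (t ^ 2 * (T - t) ^ 2))
    (hφ : φ = fun t x => Real.exp (4 * lam * ψ x) / (t ^ 2 * (T - t) ^ 2))
    (t : ℝ) (ht : t ∈ Set.Ioo 0 T)
    (x : EuclideanSpace ℝ (Fin n)) (hx : x ∈ closure G) :
    |deriv (fun τ => ℓ τ x) t| ≤ 2 * T * s * φ t x ^ ((3 : ℝ) / 2) := by
  obtain ⟨ht0, htT⟩ := ht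
  have hTt : 0 < T - t := by linarith
  have hu : 0 < t * (T - t) := mul_pos ht0 hTt
  have hg : 0 < t ^ 2 * (T - t) ^ 2 := by positivity
  set A := Real.exp (4 * lam * ψ x) with hA
  set B := Real.exp (5 * lam * M) with hB
  set E := Real.exp (6 * lam * ψ x) with hE
  have hψx : 0 < ψ x := by rw [hψ]; positivity
  have hM6 : 5 * lam * M ≤ 6 * lam * ψ x := by
    have := hψM x hx; nlinarith
  have hBE : B ≤ E := Real.exp_le_exp.mpr hM6
  have hAE : A ≤ E := Real.exp_le_exp.mpr (by nlinarith)
  have hAB : |A - B| ≤ E := by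
    rw [abs_le]
    constructor
    · nlinarith [Real.exp_pos (4 * lam * ψ x)]
    · nlinarith [Real.exp_pos (5 * lam * M)]
  -- derivative computation
  have h1 : HasDerivAt (fun τ : ℝ => τ ^ 2) (2 * t) t := by
    simpa using hasDerivAt_pow 2 t
  have h2 : HasDerivAt (fun τ : ℝ => (T - τ) ^ 2) (2 * (T - t) * (-1)) t := by
    have : HasDerivAt (fun τ : ℝ => T - τ) (-1) t := (hasDerivAt_id t).const_sub T
    simpa using this.fun_pow 2
  have hgd := h1.fun_mul h2
  have hD := (hgd.fun_inv hg.ne').const_mul (s * (A - B))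
  have hfun : (fun τ => ℓ τ x)
      = fun τ => s * (A - B) * (τ ^ 2 * (T - τ) ^ 2)⁻¹ := by
    rw [hℓ]; funext τ
    show s * (A - B) / (τ ^ 2 * (T - τ) ^ 2) = _
    rw [div_eq_mul_inv]
  rw [hfun, hD.deriv]
  -- rewrite RHS
  have hφval : φ t x ^ ((3 : ℝ) / 2) = E / (t * (T - t)) ^ 3 := by
    simp only [hφ]
    have h3 : t ^ 2 * (T - t) ^ 2 = (t * (T - t)) ^ 2 := by ring
    rw [h3, Real.div_rpow (Real.exp_pos _).le (by positivity)]
    congr 1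
    · rw [← Real.exp_one_rpow (4 * lam * ψ x), ← Real.rpow_mul (Real.exp_pos 1).le,
        Real.exp_one_rpow, hE]
      congr 1; ring
    · rw [← Real.rpow_natCast (t * (T - t)) 2, ← Real.rpow_mul hu.le]
      norm_num
  rw [hφval]
  have hder_eq : s * (A - B) *
        (-(2 * t * (T - t) ^ 2 + t ^ 2 * (2 * (T - t) * (-1))) / (t ^ 2 * (T - t) ^ 2) ^ 2)
      = -(2 * s * (A - B) * (T - 2 * t)) / (t * (T - t)) ^ 3 := by
    field_simp
    ring
  rw [hder_eq, abs_div, abs_neg, abs_of_pos (by positivity : (0:ℝ) < (t * (T - t)) ^ 3)]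
  have hT2 : |T - 2 * t| ≤ T := by rw [abs_le]; constructor <;> linarith
  have key : |2 * s * (A - B) * (T - 2 * t)| ≤ 2 * T * s * E := by
    rw [abs_mul, abs_mul, abs_of_pos (by positivity : (0:ℝ) < 2 * s)]
    calc 2 * s * |A - B| * |T - 2 * t| ≤ 2 * s * E * T := by
          gcongr
      _ = 2 * T * s * E := by ring
  calc |2 * s * (A - B) * (T - 2 * t)| / (t * (T - t)) ^ 3
      ≤ (2 * T * s * E) / (t * (T - t)) ^ 3 := by gcongr
    _ = 2 * T * s * (E / (t * (T - t)) ^ 3) := by ring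
end

section
/- There exists a constant C > 0, depending only on T and sup_{x ∈ cl(G)} |∇ψ(x)|, such that for all s > 0, λ > 0, every t ∈ (0,T), every x ∈ cl(G), every a ∈ ℂ and every w = (w₁,…,wₙ) ∈ ℂⁿ, the mixed-derivative cross term satisfies |2i·Σ_{j=1}^n 2·∂ₜ∂ⱼℓ(t,x)·(conj(wⱼ)·a − wⱼ·conj(a))| ≤ 2 s·φ(t,x)·|w|² + C·s·λ²·φ(t,x)²·|a|². -/
open scoped ComplexConjugate

lemma fderiv_ell_apply {n : ℕ} (x₀ x : EuclideanSpace ℝ (Fin n)) (s lam σ K d : ℝ) (j : Fin n) :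
    fderiv ℝ (fun y : EuclideanSpace ℝ (Fin n) =>
        s * (Real.exp (4 * lam * (‖y - x₀‖ ^ 2 + σ)) - K) / d) x
        (EuclideanSpace.single j (1 : ℝ)) =
      8 * s * lam * Real.exp (4 * lam * (‖x - x₀‖ ^ 2 + σ)) * (x - x₀) j / d := by
  rcases eq_or_ne d 0 with hd | hd
  · simp [hd]
  · have h1 : HasFDerivAt (fun y : EuclideanSpace ℝ (Fin n) => ‖y - x₀‖ ^ 2)
        (2 • (innerSL ℝ (x - x₀))) x := by
      simpa using ((hasFDerivAt_id x).sub_const x₀).norm_sq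
    have h2 : HasFDerivAt (fun y : EuclideanSpace ℝ (Fin n) => 4 * lam * (‖y - x₀‖ ^ 2 + σ))
        ((4 * lam) • (2 • (innerSL ℝ (x - x₀)))) x := (h1.add_const σ).const_mul (4 * lam)
    have h3 : HasFDerivAt (fun y : EuclideanSpace ℝ (Fin n) =>
        Real.exp (4 * lam * (‖y - x₀‖ ^ 2 + σ)))
        (Real.exp (4 * lam * (‖x - x₀‖ ^ 2 + σ)) • ((4 * lam) • (2 • (innerSL ℝ (x - x₀))))) x :=
      (Real.hasDerivAt_exp _).comp_hasFDerivAt x h2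
    have h4 := ((h3.sub_const K).const_mul s).mul_const d⁻¹
    simp only [div_eq_mul_inv]
    rw [h4.fderiv]
    simp [ContinuousLinearMap.smul_apply, innerSL_apply_apply, real_inner_comm,
      EuclideanSpace.inner_single_right]
    ring

lemma deriv_c_div {T t : ℝ} (c : ℝ) (ht : 0 < t) (htT : t < T) :
    deriv (fun τ => c / (τ ^ 2 * (T - τ) ^ 2)) t =
      -(c * (2 * t * (T - t) * (T - 2 * t))) / (t ^ 2 * (T - t) ^ 2) ^ 2 := by
  have hD : (t ^ 2 * (T - t) ^ 2) ≠ 0 := by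
    have : 0 < t ^ 2 * (T - t) ^ 2 := by
      have h1 : 0 < T - t := by linarith
      positivity
    exact this.ne'
  have hp : HasDerivAt (fun τ : ℝ => τ ^ 2) (2 * t) t := by
    simpa using hasDerivAt_pow 2 t
  have hq : HasDerivAt (fun τ : ℝ => (T - τ) ^ 2) (2 * (T - t) ^ 1 * (-1)) t := by
    have h0 : HasDerivAt (fun τ : ℝ => T - τ) (-1) t := by
      simpa using (hasDerivAt_id t).const_sub T
    simpa using h0.fun_pow 2
  have hden : HasDerivAt (fun τ : ℝ => τ ^ 2 * (T - τ) ^ 2)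
      (2 * t * (T - t) ^ 2 + t ^ 2 * (2 * (T - t) ^ 1 * (-1))) t := hp.mul hq
  have h := (hasDerivAt_const t c).fun_div hden hD
  rw [h.deriv]
  ring


lemma cross_sum_bound {n : ℕ} (F : Fin n → ℝ) (P : ℝ) (hP : 0 < P) (a : ℂ) (w : Fin n → ℂ) :
    ‖2 * Complex.I *
        ∑ j : Fin n, ((F j : ℝ) : ℂ) * (conj (w j) * a - w j * conj a)‖ ≤
      2 * P * (∑ j : Fin n, norm (w j) ^ 2) +
        (2 / P) * (∑ j : Fin n, (F j) ^ 2) * norm a ^ 2 := by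
  calc ‖2 * Complex.I * ∑ j : Fin n, ((F j : ℝ) : ℂ) * (conj (w j) * a - w j * conj a)‖
      = 2 * ‖∑ j : Fin n, ((F j : ℝ) : ℂ) * (conj (w j) * a - w j * conj a)‖ := by
        rw [norm_mul, norm_mul, Complex.norm_I, mul_one]
        norm_num
    _ ≤ 2 * ∑ j : Fin n, ‖((F j : ℝ) : ℂ) * (conj (w j) * a - w j * conj a)‖ := by
        gcongr
        exact norm_sum_le _ _
    _ = ∑ j : Fin n, 2 * (|F j| * ‖conj (w j) * a - w j * conj a‖) := by
        rw [Finset.mul_sum]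
        refine Finset.sum_congr rfl fun j _ => ?_
        rw [norm_mul, Complex.norm_real, Real.norm_eq_abs]
    _ ≤ ∑ j : Fin n, (2 * P * ‖w j‖ ^ 2 + (2 / P) * (F j) ^ 2 * ‖a‖ ^ 2) := by
        refine Finset.sum_le_sum fun j _ => ?_
        have hz : ‖conj (w j) * a - w j * conj a‖ ≤ 2 * ‖w j‖ * ‖a‖ := by
          calc ‖conj (w j) * a - w j * conj a‖ ≤ ‖conj (w j) * a‖ + ‖w j * conj a‖ :=
                norm_sub_le _ _
            _ = 2 * ‖w j‖ * ‖a‖ := by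
                simp only [norm_mul, RCLike.norm_conj]
                ring
        have h1 : 2 * (|F j| * ‖conj (w j) * a - w j * conj a‖) ≤ 4 * |F j| * ‖w j‖ * ‖a‖ := by
          have h := mul_le_mul_of_nonneg_left hz (abs_nonneg (F j))
          nlinarith [h]
        have hq2 : (2 * P * ‖w j‖ ^ 2 + (2 / P) * (F j) ^ 2 * ‖a‖ ^ 2) * P
            = 2 * (P * ‖w j‖) ^ 2 + 2 * ((F j) * ‖a‖) ^ 2 := by
          field_simp
        have h2 : 4 * |F j| * ‖w j‖ * ‖a‖ * P ≤
            (2 * P * ‖w j‖ ^ 2 + (2 / P) * (F j) ^ 2 * ‖a‖ ^ 2) * P := by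
          rw [hq2]
          nlinarith [sq_nonneg (P * ‖w j‖ - |F j| * ‖a‖), sq_abs (F j)]
        linarith [le_of_mul_le_mul_right h2 hP, h1]
    _ = 2 * P * (∑ j : Fin n, ‖w j‖ ^ 2) + (2 / P) * (∑ j : Fin n, (F j) ^ 2) * ‖a‖ ^ 2 := by
        rw [Finset.sum_add_distrib, ← Finset.mul_sum]
        congr 1
        rw [← Finset.sum_mul, ← Finset.mul_sum]



set_option maxHeartbeats 1000000 in
/-- There is `C > 0` (depending only on `T` and
`sup_{cl(G)} |∇ψ|`) such that for all `s > 0`, `λ > 0`, `t ∈ (0,T)`,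
`x ∈ cl(G)`, `a ∈ ℂ` and `w ∈ ℂⁿ`, the mixed-derivative cross term satisfies
`|2i·Σⱼ 2∂ₜ∂ⱼℓ·(conj(wⱼ)a − wⱼ conj(a))| ≤ 2sφ|w|² + C sλ²φ²|a|²`. -/
theorem carleman_cross_term_bound
    {n : ℕ} (hn : 1 ≤ n)
    (G : Set (EuclideanSpace ℝ (Fin n))) (hG : Bornology.IsBounded G)
    (x₀ : EuclideanSpace ℝ (Fin n)) (hx₀ : x₀ ∉ closure G)
    (T : ℝ) (hT : 0 < T)
    (σ : ℝ) (hσ : 0 < σ)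
    (ψ : EuclideanSpace ℝ (Fin n) → ℝ)
    (hψ : ψ = fun x => ‖x - x₀‖ ^ 2 + σ)
    (M : ℝ) (hM : M = sSup (ψ '' closure G))
    (hψM : ∀ x ∈ closure G, ψ x ≥ 5 / 6 * M)
    (ℓ : ℝ → ℝ → ℝ → EuclideanSpace ℝ (Fin n) → ℝ)
    (hℓ : ℓ = fun s lam t x =>
      s * (Real.exp (4 * lam * ψ x) - Real.exp (5 * lam * M)) /
        (t ^ 2 * (T - t) ^ 2))
    (φ : ℝ → ℝ → EuclideanSpace ℝ (Fin n) → ℝ)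
    (hφ : φ = fun lam t x => Real.exp (4 * lam * ψ x) / (t ^ 2 * (T - t) ^ 2)) :
    ∃ C : ℝ, 0 < C ∧
      ∀ s lam : ℝ, 0 < s → 0 < lam →
      ∀ t ∈ Set.Ioo (0 : ℝ) T, ∀ x ∈ closure G, ∀ a : ℂ, ∀ w : Fin n → ℂ,
        norm
            (2 * Complex.I *
              ∑ j : Fin n,
                ((2 * deriv
                    (fun τ => fderiv ℝ (fun y => ℓ s lam τ y) x
                      (EuclideanSpace.single j (1 : ℝ))) t : ℝ) : ℂ) *
                  (conj (w j) * a - w j * conj a)) ≤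
          2 * s * φ lam t x * (∑ j : Fin n, norm (w j) ^ 2) +
            C * s * lam ^ 2 * φ lam t x ^ 2 * norm a ^ 2 := by
  obtain ⟨R, hR⟩ := hG.closure.subset_closedBall x₀
  set R' : ℝ := max R 0 with hR'def
  refine ⟨2048 * T ^ 2 * R' ^ 2 + 1, by positivity, ?_⟩
  intro s lam hs hlam t ht x hx a w
  obtain ⟨ht0, htT⟩ := ht
  have htT' : 0 < T - t := by linarith
  have hD : 0 < t ^ 2 * (T - t) ^ 2 := by positivity
  have hψx : ψ x = ‖x - x₀‖ ^ 2 + σ := by rw [hψ]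
  have hE1 : 1 ≤ Real.exp (4 * lam * ψ x) := by
    apply Real.one_le_exp
    have hψ0 : 0 ≤ ψ x := by rw [hψx]; positivity
    have := hlam.le
    nlinarith
  have hE0 : 0 < Real.exp (4 * lam * ψ x) := Real.exp_pos _
  have hφx : φ lam t x = Real.exp (4 * lam * ψ x) / (t ^ 2 * (T - t) ^ 2) := by rw [hφ]
  -- space derivative of ℓ
  have hfder : ∀ (j : Fin n) (τ : ℝ),
      fderiv ℝ (fun y => ℓ s lam τ y) x (EuclideanSpace.single j (1 : ℝ)) =
        8 * s * lam * Real.exp (4 * lam * ψ x) * (x - x₀) j / (τ ^ 2 * (T - τ) ^ 2) := by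
    intro j τ
    simp only [hℓ, hψ]
    exact fderiv_ell_apply x₀ x s lam σ (Real.exp (5 * lam * M)) (τ ^ 2 * (T - τ) ^ 2) j
  -- time derivative of the space derivative
  have hderiv : ∀ j : Fin n,
      deriv (fun τ => fderiv ℝ (fun y => ℓ s lam τ y) x (EuclideanSpace.single j (1 : ℝ))) t =
        -((8 * s * lam * Real.exp (4 * lam * ψ x) * (x - x₀) j) *
            (2 * t * (T - t) * (T - 2 * t))) / (t ^ 2 * (T - t) ^ 2) ^ 2 := by
    intro j
    have hfun : (fun τ => fderiv ℝ (fun y => ℓ s lam τ y) x (EuclideanSpace.single j (1 : ℝ)))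
        = fun τ => (8 * s * lam * Real.exp (4 * lam * ψ x) * (x - x₀) j) /
            (τ ^ 2 * (T - τ) ^ 2) := funext fun τ => hfder j τ
    rw [hfun, deriv_c_div _ ht0 htT]
  -- bound on the coordinates of x - x₀
  have hxR : ‖x - x₀‖ ≤ R' := by
    have h := hR hx
    rw [Metric.mem_closedBall, dist_eq_norm] at h
    exact le_trans h (le_max_left _ _)
  have hv2 : ∑ j : Fin n, ((x - x₀) j) ^ 2 ≤ R' ^ 2 := by
    have h1 : ∑ j : Fin n, ((x - x₀) j) ^ 2 = ‖x - x₀‖ ^ 2 := by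
      rw [EuclideanSpace.norm_eq, Real.sq_sqrt (by positivity)]
      refine Finset.sum_congr rfl fun j _ => ?_
      rw [Real.norm_eq_abs, sq_abs]
    rw [h1]
    have := norm_nonneg (x - x₀)
    nlinarith
  -- abbreviations
  set E : ℝ := Real.exp (4 * lam * ψ x) with hEdef
  set D : ℝ := t ^ 2 * (T - t) ^ 2 with hDdef
  set F : Fin n → ℝ := fun j =>
    2 * (-((8 * s * lam * E * (x - x₀) j) * (2 * t * (T - t) * (T - 2 * t))) / D ^ 2) with hFdef
  have hrw : ∀ j : Fin n,
      ((2 * deriv (fun τ => fderiv ℝ (fun y => ℓ s lam τ y) x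
          (EuclideanSpace.single j (1 : ℝ))) t : ℝ) : ℂ) = ((F j : ℝ) : ℂ) := by
    intro j
    rw [hderiv j]
  have hP : 0 < s * (E / D) := by positivity
  -- sum of squares of F
  have hF2 : ∑ j : Fin n, (F j) ^ 2 ≤ 1024 * s ^ 2 * lam ^ 2 * E ^ 2 * T ^ 2 * R' ^ 2 / D ^ 3 := by
    have hFj : ∀ j : Fin n, (F j) ^ 2 =
        (1024 * s ^ 2 * lam ^ 2 * E ^ 2 * (T - 2 * t) ^ 2 / D ^ 3) * ((x - x₀) j) ^ 2 := by
      intro j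
      rw [hFdef]
      have : D ^ 4 = D * D ^ 3 := by ring
      field_simp
      rw [hDdef]
      ring
    rw [Finset.sum_congr rfl fun j _ => hFj j, ← Finset.mul_sum]
    have hcoef : 1024 * s ^ 2 * lam ^ 2 * E ^ 2 * (T - 2 * t) ^ 2 / D ^ 3 ≤
        1024 * s ^ 2 * lam ^ 2 * E ^ 2 * T ^ 2 / D ^ 3 := by
      have hTt : (T - 2 * t) ^ 2 ≤ T ^ 2 := by nlinarith
      have : (0:ℝ) < D ^ 3 := by positivity
      gcongr
    have hsum0 : (0:ℝ) ≤ ∑ j : Fin n, ((x - x₀) j) ^ 2 :=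
      Finset.sum_nonneg fun j _ => sq_nonneg _
    calc (1024 * s ^ 2 * lam ^ 2 * E ^ 2 * (T - 2 * t) ^ 2 / D ^ 3) *
          ∑ j : Fin n, ((x - x₀) j) ^ 2
        ≤ (1024 * s ^ 2 * lam ^ 2 * E ^ 2 * T ^ 2 / D ^ 3) * R' ^ 2 := by
          have h0 : (0:ℝ) ≤ 1024 * s ^ 2 * lam ^ 2 * E ^ 2 * (T - 2 * t) ^ 2 / D ^ 3 := by
            positivity
          exact mul_le_mul hcoef hv2 hsum0 (by positivity)
      _ = 1024 * s ^ 2 * lam ^ 2 * E ^ 2 * T ^ 2 * R' ^ 2 / D ^ 3 := by ring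
  -- main estimate
  rw [hφx]
  simp only [hrw]
  calc ‖2 * Complex.I *
        ∑ j : Fin n, ((F j : ℝ) : ℂ) * (conj (w j) * a - w j * conj a)‖
      ≤ 2 * (s * (E / D)) * (∑ j : Fin n, norm (w j) ^ 2) +
        (2 / (s * (E / D))) * (∑ j : Fin n, (F j) ^ 2) * norm a ^ 2 :=
        cross_sum_bound F (s * (E / D)) hP a w
    _ ≤ 2 * s * (E / D) * (∑ j : Fin n, norm (w j) ^ 2) +
        (2048 * T ^ 2 * R' ^ 2 + 1) * s * lam ^ 2 * (E / D) ^ 2 * norm a ^ 2 := by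
        have hsq : (0:ℝ) ≤ norm a ^ 2 := sq_nonneg _
        have htail : (2 / (s * (E / D))) * (∑ j : Fin n, (F j) ^ 2) ≤
            (2048 * T ^ 2 * R' ^ 2 + 1) * s * lam ^ 2 * (E / D) ^ 2 := by
          have h1 : (2 / (s * (E / D))) * (∑ j : Fin n, (F j) ^ 2) ≤
              (2 / (s * (E / D))) * (1024 * s ^ 2 * lam ^ 2 * E ^ 2 * T ^ 2 * R' ^ 2 / D ^ 3) :=
            mul_le_mul_of_nonneg_left hF2 (by positivity)
          have h2 : (2 / (s * (E / D))) * (1024 * s ^ 2 * lam ^ 2 * E ^ 2 * T ^ 2 * R' ^ 2 / D ^ 3)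
              = 2048 * s * lam ^ 2 * E * T ^ 2 * R' ^ 2 / D ^ 2 := by
            field_simp
            ring
          have h3 : 2048 * s * lam ^ 2 * E * T ^ 2 * R' ^ 2 / D ^ 2 ≤
              (2048 * T ^ 2 * R' ^ 2 + 1) * s * lam ^ 2 * (E / D) ^ 2 := by
            have hR0 : (0:ℝ) ≤ R' := le_max_right _ _
            rw [div_pow, show (2048 * T ^ 2 * R' ^ 2 + 1) * s * lam ^ 2 * (E ^ 2 / D ^ 2) =
              ((2048 * T ^ 2 * R' ^ 2 + 1) * s * lam ^ 2 * E ^ 2) / D ^ 2 from by ring]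
            refine div_le_div_of_nonneg_right ?_ (by positivity)
            nlinarith [mul_nonneg (mul_nonneg
                (by positivity : (0:ℝ) ≤ 2048 * T ^ 2 * R' ^ 2 * s * lam ^ 2) hE0.le)
                (sub_nonneg.2 hE1),
              mul_nonneg (mul_nonneg hs.le (sq_nonneg lam)) (sq_nonneg E)]
          calc (2 / (s * (E / D))) * (∑ j : Fin n, (F j) ^ 2)
              ≤ 2048 * s * lam ^ 2 * E * T ^ 2 * R' ^ 2 / D ^ 2 := by rw [← h2]; exact h1
            _ ≤ (2048 * T ^ 2 * R' ^ 2 + 1) * s * lam ^ 2 * (E / D) ^ 2 := h3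
        have := mul_le_mul_of_nonneg_right htail hsq
        have h2s : 2 * (s * (E / D)) = 2 * s * (E / D) := by ring
        linarith [this]
end
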